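/- Let w = 1/2 + i/(2√3). There exist constants C > 0 and δ > 0 such that for all complex z with |z| ≤ δ, |((1 + wz/2)(1 + \overline{w}z/2)) / ((1 − wz/2)(1 − \overline{w}z/2)) − e^{z}| ≤ C·|z|⁵; i.e., the 2-step complex implicit midpoint method with steps wΔt and \overline{w}Δt is fourth-order accurate for the linear test equation ẏ = λy. -/

import Mathlib

open Complex

/-- The 2-step complex implicit midpoint method with steps `wΔt` and `conj w Δt`,
where `w = 1/2 + i/(2√3)`, is fourth-order accurate for the linear test equation:
there are `C > 0` and `δ > 0` such that for all `z : ℂ` with `|z| ≤ δ`,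
`|((1 + wz/2)(1 + conj w z/2)) / ((1 − wz/2)(1 − conj w z/2)) − e^z| ≤ C |z|⁵`. -/
theorem implicit_midpoint_two_step_fourth_order :
    let w : ℂ := 1 / 2 + I / (2 * (Real.sqrt 3 : ℂ))
    ∃ C > (0 : ℝ), ∃ δ > (0 : ℝ), ∀ z : ℂ, ‖z‖ ≤ δ →
      ‖((1 + w * z / 2) * (1 + (starRingEnd ℂ) w * z / 2)) /
          ((1 - w * z / 2) * (1 - (starRingEnd ℂ) w * z / 2)) - Complex.exp z‖
        ≤ C * ‖z‖ ^ 5 := by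
  intro w
  have hs3 : (Real.sqrt 3 : ℂ) * (Real.sqrt 3 : ℂ) = 3 := by
    rw [← Complex.ofReal_mul, Real.mul_self_sqrt (by norm_num)]
    norm_num
  have hs0 : (Real.sqrt 3 : ℂ) ≠ 0 := by
    intro h; rw [h] at hs3; norm_num at hs3
  have hwc : (starRingEnd ℂ) w = 1 / 2 - I / (2 * (Real.sqrt 3 : ℂ)) := by
    simp [w, map_add, map_div₀, map_mul, map_ofNat, Complex.conj_I, Complex.conj_ofReal]
    ring
  have hw1 : w + (starRingEnd ℂ) w = 1 := by
    rw [hwc]; simp only [w]; ring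
  have hw2 : w * (starRingEnd ℂ) w = 1 / 3 := by
    rw [hwc]; simp only [w]
    field_simp
    linear_combination (3 : ℂ) * Complex.I_sq + (1 - Complex.I ^ 2) * hs3 +
      (((Real.sqrt 3 : ℂ)) ^ 2 - 9) * Complex.I_sq + (-3 : ℂ) * hs3
  refine ⟨1, one_pos, 1 / 2, by norm_num, ?_⟩
  intro z hz
  have hz1 : ‖z‖ ≤ 1 := hz.trans (by norm_num)
  have hz0 : (0 : ℝ) ≤ ‖z‖ := norm_nonneg z
  have hNum : (1 + w * z / 2) * (1 + (starRingEnd ℂ) w * z / 2)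
      = 1 + z / 2 + z ^ 2 / 12 := by
    linear_combination (z / 2) * hw1 + (z ^ 2 / 4) * hw2
  have hDen : (1 - w * z / 2) * (1 - (starRingEnd ℂ) w * z / 2)
      = 1 - z / 2 + z ^ 2 / 12 := by
    linear_combination (-z / 2) * hw1 + (z ^ 2 / 4) * hw2
  set D : ℂ := 1 - z / 2 + z ^ 2 / 12 with hD
  set P : ℂ := ∑ m ∈ Finset.range 5, z ^ m / m.factorial with hP
  have hPval : P = 1 + z + z ^ 2 / 2 + z ^ 3 / 6 + z ^ 4 / 24 := by
    norm_num [hP, Finset.sum_range_succ, Nat.factorial]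
    try ring
  -- norm lower bound on D
  have hDnorm : (1 : ℝ) / 2 ≤ ‖D‖ := by
    have h1 : ‖z / 2 - z ^ 2 / 12‖ ≤ 1 / 2 := by
      calc ‖z / 2 - z ^ 2 / 12‖ ≤ ‖z / 2‖ + ‖z ^ 2 / 12‖ := norm_sub_le _ _
        _ = ‖z‖ / 2 + ‖z‖ ^ 2 / 12 := by
            simp [norm_div, norm_pow]
        _ ≤ (1 : ℝ) / 2 / 2 + (1 / 2) ^ 2 / 12 := by
            gcongr
        _ ≤ 1 / 2 := by norm_num
    have h2 : ‖(1 : ℂ)‖ - ‖z / 2 - z ^ 2 / 12‖ ≤ ‖D‖ := by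
      have : D = 1 - (z / 2 - z ^ 2 / 12) := by rw [hD]; ring
      rw [this]
      exact norm_sub_norm_le _ _ |>.trans_eq (by rw [norm_sub_rev]) |>.trans le_rfl
    simp only [norm_one] at h2
    linarith
  have hDne : D ≠ 0 := by
    intro h
    rw [h, norm_zero] at hDnorm
    norm_num at hDnorm
  -- key polynomial identity
  have hNPD : (1 + z / 2 + z ^ 2 / 12) - P * D = z ^ 5 * (1 / 144 - z / 288) := by
    rw [hPval, hD]; ring
  have hsplit : (1 + z / 2 + z ^ 2 / 12) / D - Complex.exp z
      = z ^ 5 * (1 / 144 - z / 288) / D + (P - Complex.exp z) := by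
    have h2 : (1 + z / 2 + z ^ 2 / 12) = z ^ 5 * (1 / 144 - z / 288) + P * D := by
      linear_combination hNPD
    rw [h2, add_div, mul_div_cancel_right₀ _ hDne]
    ring
  have hexp : ‖P - Complex.exp z‖ ≤ ‖z‖ ^ 5 * (1 / 100) := by
    rw [norm_sub_rev]
    have := Complex.exp_bound (x := z) hz1 (n := 5) (by norm_num)
    calc ‖Complex.exp z - P‖ ≤ ‖z‖ ^ 5 * ((6 : ℝ) * ((120 : ℝ) * 5)⁻¹) := by
          simpa [hP, Nat.factorial] using this
      _ = ‖z‖ ^ 5 * (1 / 100) := by norm_num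
  have hq : ‖z ^ 5 * (1 / 144 - z / 288) / D‖ ≤ ‖z‖ ^ 5 * (5 / 288) := by
    rw [norm_div, norm_mul, norm_pow]
    have hqn : ‖(1 / 144 : ℂ) - z / 288‖ ≤ 5 / 576 := by
      calc ‖(1 / 144 : ℂ) - z / 288‖ ≤ ‖(1 / 144 : ℂ)‖ + ‖z / 288‖ := norm_sub_le _ _
        _ = 1 / 144 + ‖z‖ / 288 := by simp [norm_div]
        _ ≤ 1 / 144 + (1 / 2) / 288 := by gcongr
        _ = 5 / 576 := by norm_num
    have hDpos : (0 : ℝ) < ‖D‖ := by positivity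
    rw [div_le_iff₀ hDpos]
    calc ‖z‖ ^ 5 * ‖(1 / 144 : ℂ) - z / 288‖ ≤ ‖z‖ ^ 5 * (5 / 576) := by gcongr
      _ = ‖z‖ ^ 5 * (5 / 288) * (1 / 2) := by ring
      _ ≤ ‖z‖ ^ 5 * (5 / 288) * ‖D‖ := by gcongr
  rw [hNum, hDen, hsplit]
  calc ‖z ^ 5 * (1 / 144 - z / 288) / D + (P - Complex.exp z)‖
      ≤ ‖z ^ 5 * (1 / 144 - z / 288) / D‖ + ‖P - Complex.exp z‖ := norm_add_le _ _
    _ ≤ ‖z‖ ^ 5 * (5 / 288) + ‖z‖ ^ 5 * (1 / 100) := add_le_add hq hexp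
    _ ≤ 1 * ‖z‖ ^ 5 := by nlinarith [pow_nonneg hz0 5]
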